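/- Let U₁, U₂ be continuous positive functions on (0,B) satisfying (y/x)^α ≤ U_i(y)/U_i(x) ≤ y/x for 0 < x ≤ y < B with α ∈ (0,1), and let (r₁*, r₂*) be an interior allocation with r₁* + r₂* = B and U₁(r₁*) = U₂(r₂*). Then for the iteration r_i^{t+1} = (r_i^t/U_i(r_i^t))·B / Σ_j (r_j^t/U_j(r_j^t)) started at any interior allocation, r₁^t → r₁* and r₂^t → r₂*. -/

import Mathlib

open Set Filter

theorem allocation_convergence
    (α B : ℝ) (hα : α ∈ Ioo (0:ℝ) 1) (hB : 0 < B)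
    (U₁ U₂ : ℝ → ℝ)
    (hc₁ : ContinuousOn U₁ (Ioo 0 B)) (hc₂ : ContinuousOn U₂ (Ioo 0 B))
    (hU₁pos : ∀ r ∈ Ioo (0:ℝ) B, 0 < U₁ r)
    (hU₂pos : ∀ r ∈ Ioo (0:ℝ) B, 0 < U₂ r)
    (hU₁ratio : ∀ x y : ℝ, 0 < x → x ≤ y → y < B →
      (y / x) ^ α ≤ U₁ y / U₁ x ∧ U₁ y / U₁ x ≤ y / x)
    (hU₂ratio : ∀ x y : ℝ, 0 < x → x ≤ y → y < B →
      (y / x) ^ α ≤ U₂ y / U₂ x ∧ U₂ y / U₂ x ≤ y / x)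
    (r₁s r₂s : ℝ) (hr₁s : 0 < r₁s) (hr₂s : 0 < r₂s) (hsums : r₁s + r₂s = B)
    (heq : U₁ r₁s = U₂ r₂s)
    (r₁ r₂ : ℕ → ℝ)
    (hpos₁ : ∀ t, 0 < r₁ t) (hpos₂ : ∀ t, 0 < r₂ t)
    (hsum : ∀ t, r₁ t + r₂ t = B)
    (hupd₁ : ∀ t, r₁ (t + 1) =
      (r₁ t / U₁ (r₁ t)) * B / (r₁ t / U₁ (r₁ t) + r₂ t / U₂ (r₂ t)))
    (hupd₂ : ∀ t, r₂ (t + 1) =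
      (r₂ t / U₂ (r₂ t)) * B / (r₁ t / U₁ (r₁ t) + r₂ t / U₂ (r₂ t))) :
    Tendsto r₁ atTop (nhds r₁s) ∧ Tendsto r₂ atTop (nhds r₂s) := by
  obtain ⟨hα0, hα1⟩ := hα
  have hr₁B : ∀ t, r₁ t < B := fun t => by have := hpos₂ t; linarith [hsum t]
  have hr₂B : ∀ t, r₂ t < B := fun t => by have := hpos₁ t; linarith [hsum t]
  have hr₁sB : r₁s < B := by linarith
  have hr₂sB : r₂s < B := by linarith
  have hmem₁ : ∀ t, r₁ t ∈ Ioo (0:ℝ) B := fun t => ⟨hpos₁ t, hr₁B t⟩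
  have hmem₂ : ∀ t, r₂ t ∈ Ioo (0:ℝ) B := fun t => ⟨hpos₂ t, hr₂B t⟩
  have hw : 0 < U₁ r₁s := hU₁pos r₁s ⟨hr₁s, hr₁sB⟩
  -- strict monotonicity of the utilities on (0, B)
  have smono₁ : ∀ x y : ℝ, 0 < x → x < y → y < B → U₁ x < U₁ y := by
    intro x y hx hxy hyB
    have h1 := (hU₁ratio x y hx hxy.le hyB).1
    have hux := hU₁pos x ⟨hx, lt_trans hxy hyB⟩
    have h2 : (1:ℝ) < (y / x) ^ α := by
      have : (1:ℝ) < y / x := (one_lt_div hx).2 hxy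
      exact Real.one_lt_rpow_iff_of_pos (by linarith) |>.2 (Or.inl ⟨this, hα0⟩)
    have : (1:ℝ) < U₁ y / U₁ x := lt_of_lt_of_le h2 h1
    have := (one_lt_div hux).1 this
    linarith
  have smono₂ : ∀ x y : ℝ, 0 < x → x < y → y < B → U₂ x < U₂ y := by
    intro x y hx hxy hyB
    have h1 := (hU₂ratio x y hx hxy.le hyB).1
    have hux := hU₂pos x ⟨hx, lt_trans hxy hyB⟩
    have h2 : (1:ℝ) < (y / x) ^ α := by
      have : (1:ℝ) < y / x := (one_lt_div hx).2 hxy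
      exact Real.one_lt_rpow_iff_of_pos (by linarith) |>.2 (Or.inl ⟨this, hα0⟩)
    have : (1:ℝ) < U₂ y / U₂ x := lt_of_lt_of_le h2 h1
    have := (one_lt_div hux).1 this
    linarith
  have mono₁ : ∀ x y : ℝ, 0 < x → x ≤ y → y < B → U₁ x ≤ U₁ y := by
    intro x y hx hxy hyB
    rcases eq_or_lt_of_le hxy with rfl | h
    · exact le_refl _
    · exact (smono₁ x y hx h hyB).le
  have mono₂ : ∀ x y : ℝ, 0 < x → x ≤ y → y < B → U₂ x ≤ U₂ y := by
    intro x y hx hxy hyB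
    rcases eq_or_lt_of_le hxy with rfl | h
    · exact le_refl _
    · exact (smono₂ x y hx h hyB).le
  have hEpos : ∀ t, 0 < r₁ t * U₂ (r₂ t) + r₂ t * U₁ (r₁ t) := by
    intro t
    have hu := hU₁pos _ (hmem₁ t)
    have hv := hU₂pos _ (hmem₂ t)
    have := hpos₁ t; have := hpos₂ t
    positivity
  -- rewrite the update in cleared-denominator form
  have keyform : ∀ t, r₁ (t+1) =
      r₁ t * U₂ (r₂ t) * B / (r₁ t * U₂ (r₂ t) + r₂ t * U₁ (r₁ t)) := by
    intro t
    have hu := hU₁pos _ (hmem₁ t)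
    have hv := hU₂pos _ (hmem₂ t)
    have hD : 0 < r₁ t / U₁ (r₁ t) + r₂ t / U₂ (r₂ t) := by
      have := hpos₁ t; have := hpos₂ t; positivity
    rw [hupd₁ t, div_eq_div_iff hD.ne' (hEpos t).ne']
    field_simp
  -- one-step lemmas
  have step_le : ∀ t, r₁ t ≤ r₁s → r₁ t ≤ r₁ (t+1) ∧ r₁ (t+1) ≤ r₁s := by
    intro t hle
    have hbge : r₂s ≤ r₂ t := by linarith [hsum t]
    have hu := hU₁pos _ (hmem₁ t)
    have hv := hU₂pos _ (hmem₂ t)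
    have hE := hEpos t
    have huv : U₁ (r₁ t) ≤ U₂ (r₂ t) := by
      calc U₁ (r₁ t) ≤ U₁ r₁s := mono₁ _ r₁s (hpos₁ t) hle hr₁sB
        _ = U₂ r₂s := heq
        _ ≤ U₂ (r₂ t) := mono₂ r₂s _ hr₂s hbge (hr₂B t)
    have hcross : r₁ t * r₂s * U₂ (r₂ t) ≤ r₁s * r₂ t * U₁ (r₁ t) := by
      have h1 := (hU₂ratio r₂s (r₂ t) hr₂s hbge (hr₂B t)).2
      have h2 := (hU₁ratio (r₁ t) r₁s (hpos₁ t) hle hr₁sB).2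
      rw [div_le_div_iff₀ (hU₂pos r₂s ⟨hr₂s, hr₂sB⟩) hr₂s, ← heq] at h1
      rw [div_le_div_iff₀ hu (hpos₁ t)] at h2
      -- h1 : U₂ (r₂ t) * r₂s ≤ r₂ t * U₁ r₁s ; h2 : U₁ r₁s * r₁ t ≤ r₁s * U₁ (r₁ t)
      nlinarith [mul_le_mul_of_nonneg_left h1 (hpos₁ t).le,
        mul_le_mul_of_nonneg_left h2 (hpos₂ t).le]
    rw [keyform t]
    constructor
    · rw [le_div_iff₀ hE, ← hsum t]
      nlinarith [mul_le_mul_of_nonneg_left huv (mul_nonneg (hpos₁ t).le (hpos₂ t).le)]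
    · rw [div_le_iff₀ hE, ← hsums]
      nlinarith [hcross]
  have step_ge : ∀ t, r₁s ≤ r₁ t → r₁ (t+1) ≤ r₁ t ∧ r₁s ≤ r₁ (t+1) := by
    intro t hge
    have hble : r₂ t ≤ r₂s := by linarith [hsum t]
    have hu := hU₁pos _ (hmem₁ t)
    have hv := hU₂pos _ (hmem₂ t)
    have hE := hEpos t
    have huv : U₂ (r₂ t) ≤ U₁ (r₁ t) := by
      calc U₂ (r₂ t) ≤ U₂ r₂s := mono₂ _ r₂s (hpos₂ t) hble hr₂sB
        _ = U₁ r₁s := heq.symm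
        _ ≤ U₁ (r₁ t) := mono₁ r₁s _ hr₁s hge (hr₁B t)
    have hcross : r₁s * r₂ t * U₁ (r₁ t) ≤ r₁ t * r₂s * U₂ (r₂ t) := by
      have h1 := (hU₂ratio (r₂ t) r₂s (hpos₂ t) hble hr₂sB).2
      have h2 := (hU₁ratio r₁s (r₁ t) hr₁s hge (hr₁B t)).2
      rw [div_le_div_iff₀ hv (hpos₂ t), ← heq] at h1
      rw [div_le_div_iff₀ hw hr₁s] at h2
      -- h1 : U₁ r₁s * r₂ t ≤ r₂s * U₂ (r₂ t) ; h2 : U₁ (r₁ t) * r₁s ≤ r₁ t * U₁ r₁s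
      nlinarith [mul_le_mul_of_nonneg_left h1 (hpos₁ t).le,
        mul_le_mul_of_nonneg_left h2 (hpos₂ t).le]
    rw [keyform t]
    constructor
    · rw [div_le_iff₀ hE, ← hsum t]
      nlinarith [mul_le_mul_of_nonneg_left huv (mul_nonneg (hpos₁ t).le (hpos₂ t).le)]
    · rw [le_div_iff₀ hE, ← hsums]
      nlinarith [hcross]
  -- any limit in (0,B) is a fixed point
  have fixed : ∀ L, Tendsto r₁ atTop (nhds L) → L ∈ Ioo (0:ℝ) B →
      U₁ L = U₂ (B - L) := by
    intro L hLr hL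
    have hLB : B - L ∈ Ioo (0:ℝ) B := ⟨by linarith [hL.2], by linarith [hL.1]⟩
    have hUL : 0 < U₁ L := hU₁pos L hL
    have hVL : 0 < U₂ (B - L) := hU₂pos _ hLB
    have hr₂eq : r₂ = fun t => B - r₁ t := funext fun t => by linarith [hsum t]
    have hr₂lim : Tendsto r₂ atTop (nhds (B - L)) := by
      rw [hr₂eq]; exact tendsto_const_nhds.sub hLr
    have T1 : Tendsto (fun t => U₁ (r₁ t)) atTop (nhds (U₁ L)) :=
      ((hc₁.continuousAt (Ioo_mem_nhds hL.1 hL.2)).tendsto).comp hLr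
    have T2 : Tendsto (fun t => U₂ (r₂ t)) atTop (nhds (U₂ (B - L))) :=
      ((hc₂.continuousAt (Ioo_mem_nhds hLB.1 hLB.2)).tendsto).comp hr₂lim
    have H1 : Tendsto (fun t => r₁ t / U₁ (r₁ t)) atTop (nhds (L / U₁ L)) :=
      hLr.div T1 hUL.ne'
    have H2 : Tendsto (fun t => r₂ t / U₂ (r₂ t)) atTop
        (nhds ((B - L) / U₂ (B - L))) := hr₂lim.div T2 hVL.ne'
    have hdenpos : 0 < L / U₁ L + (B - L) / U₂ (B - L) := by
      have := hL.1; have := hLB.1; positivity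
    have Hs : Tendsto (fun t => (r₁ t / U₁ (r₁ t)) * B /
        (r₁ t / U₁ (r₁ t) + r₂ t / U₂ (r₂ t))) atTop
        (nhds ((L / U₁ L) * B / (L / U₁ L + (B - L) / U₂ (B - L)))) :=
      (H1.mul tendsto_const_nhds).div (H1.add H2) hdenpos.ne'
    have Hs' : Tendsto (fun t => r₁ (t + 1)) atTop
        (nhds ((L / U₁ L) * B / (L / U₁ L + (B - L) / U₂ (B - L)))) := by
      have : (fun t => r₁ (t + 1)) = fun t => (r₁ t / U₁ (r₁ t)) * B /
          (r₁ t / U₁ (r₁ t) + r₂ t / U₂ (r₂ t)) := funext hupd₁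
      rw [this]; exact Hs
    have Hs'' : Tendsto (fun t => r₁ (t + 1)) atTop (nhds L) :=
      hLr.comp (tendsto_add_atTop_nat 1)
    have hfix : L = (L / U₁ L) * B / (L / U₁ L + (B - L) / U₂ (B - L)) :=
      tendsto_nhds_unique Hs'' Hs'
    have hL0 := hL.1
    have hLB0 := hLB.1
    rw [eq_div_iff hdenpos.ne'] at hfix
    field_simp at hfix
    have hkey : L * (B - L) * U₁ L * (U₁ L - U₂ (B - L)) = 0 := by
      linear_combination (L * U₁ L) * hfix
    have hne : L * (B - L) * U₁ L ≠ 0 := by positivity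
    have h0 := (mul_eq_zero.mp hkey).resolve_left hne
    linarith
  -- uniqueness of the fixed point
  have uniq : ∀ L, L ∈ Ioo (0:ℝ) B → U₁ L = U₂ (B - L) → L = r₁s := by
    intro L hL hfix
    by_contra hne
    rcases lt_or_gt_of_ne hne with h | h
    · have h1 : U₁ L < U₁ r₁s := smono₁ L r₁s hL.1 h hr₁sB
      have h2 : U₂ r₂s < U₂ (B - L) := by
        apply smono₂ r₂s (B - L) hr₂s (by linarith) (by linarith [hL.1])
      rw [heq] at h1
      linarith
    · have h1 : U₁ r₁s < U₁ L := smono₁ r₁s L hr₁s h hL.2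
      have h2 : U₂ (B - L) < U₂ r₂s := by
        apply smono₂ (B - L) r₂s (by linarith [hL.2]) (by linarith) hr₂sB
      rw [heq] at h1
      linarith
  -- main convergence argument
  have main : Tendsto r₁ atTop (nhds r₁s) := by
    rcases le_or_gt (r₁ 0) r₁s with h0 | h0
    · have hinv : ∀ t, r₁ t ≤ r₁s := by
        intro t; induction t with
        | zero => exact h0
        | succ n ih => exact (step_le n ih).2
      have hmono : Monotone r₁ :=
        monotone_nat_of_le_succ (fun t => (step_le t (hinv t)).1)
      have hbdd : BddAbove (Set.range r₁) := ⟨r₁s, by rintro _ ⟨t, rfl⟩; exact hinv t⟩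
      have hLr : Tendsto r₁ atTop (nhds (⨆ t, r₁ t)) :=
        tendsto_atTop_ciSup hmono hbdd
      set L := ⨆ t, r₁ t with hLdef
      have hLle : L ≤ r₁s := ciSup_le hinv
      have hLge : r₁ 0 ≤ L := le_ciSup hbdd 0
      have hLmem : L ∈ Ioo (0:ℝ) B := ⟨lt_of_lt_of_le (hpos₁ 0) hLge,
        lt_of_le_of_lt hLle hr₁sB⟩
      have := uniq L hLmem (fixed L hLr hLmem)
      rwa [this] at hLr
    · have hinv : ∀ t, r₁s ≤ r₁ t := by
        intro t; induction t with
        | zero => exact h0.le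
        | succ n ih => exact (step_ge n ih).2
      have hanti : Antitone r₁ :=
        antitone_nat_of_succ_le (fun t => (step_ge t (hinv t)).1)
      have hbdd : BddBelow (Set.range r₁) := ⟨r₁s, by rintro _ ⟨t, rfl⟩; exact hinv t⟩
      have hLr : Tendsto r₁ atTop (nhds (⨅ t, r₁ t)) :=
        tendsto_atTop_ciInf hanti hbdd
      set L := ⨅ t, r₁ t with hLdef
      have hLge : r₁s ≤ L := le_ciInf hinv
      have hLle : L ≤ r₁ 0 := ciInf_le hbdd 0
      have hLmem : L ∈ Ioo (0:ℝ) B := ⟨lt_of_lt_of_le hr₁s hLge,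
        lt_of_le_of_lt hLle (hr₁B 0)⟩
      have := uniq L hLmem (fixed L hLr hLmem)
      rwa [this] at hLr
  refine ⟨main, ?_⟩
  have hr₂eq : r₂ = fun t => B - r₁ t := funext fun t => by linarith [hsum t]
  rw [hr₂eq]
  have : r₂s = B - r₁s := by linarith
  rw [this]
  exact tendsto_const_nhds.sub main
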